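/- Let X be a geodesic metric space and D > 0. There exists E = E(D) > D such that: if x, y ∈ X and κ₁, ..., κ_N are geodesics, and the geodesic [x,y] contains subsegments [x₁,y₁], ..., [x_N,y_N] in order from left to right such that each [xᵢ,yᵢ] D-fellow travels with κᵢ (endpoints within D and Hausdorff distance < D), then the sequence (x, κ₁, ..., κ_N, y) is E-aligned, i.e., d_{κᵢ}(terminal point of κᵢ, κ_{i+1}) < E and d_{κ_{i+1}}(initial point of κ_{i+1}, κᵢ) < E for all consecutive pairs, with the endpoint conditions for x and y as degenerate segments. -/
import Mathlib


open Metric Set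

variable {X : Type*} [MetricSpace X]

/-- Nearest-point projection of the point `x` to the set `A`. -/
noncomputable def proj (A : Set X) (x : X) : Set X :=
  {a | a ∈ A ∧ dist x a = infDist x A}

/-- Nearest-point projection of the set `B` to the set `A`. -/
noncomputable def projSet (A B : Set X) : Set X := ⋃ x ∈ B, proj A x

/-- Distance between two subsets of a metric space. -/
noncomputable def setDist (A B : Set X) : ℝ := sInf (Set.image2 dist A B)

/-- `γ` is a geodesic segment from `x` to `y` (image of a unit-speed parameterization). -/
def IsGeodesicSeg (γ : Set X) (x y : X) : Prop :=
  ∃ (f : ℝ → X) (L : ℝ), 0 ≤ L ∧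
    (∀ s ∈ Icc 0 L, ∀ t ∈ Icc 0 L, dist (f s) (f t) = |s - t|) ∧
    f 0 = x ∧ f L = y ∧ γ = f '' Icc 0 L

/-- `γ` is a geodesic segment. -/
def IsGeodesic (γ : Set X) : Prop := ∃ x y, IsGeodesicSeg γ x y

/-- `γ` is `D`-contracting: any geodesic at distance `> D` from `γ`
projects onto `γ` with diameter `< D`. -/
def IsContractingSet (D : ℝ) (γ : Set X) : Prop :=
  ∀ κ : Set X, IsGeodesic κ → D < setDist γ κ → diam (projSet γ κ) < D

/-- `X` is a geodesic metric space. -/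
def GeodesicSpace (X : Type*) [MetricSpace X] : Prop :=
  ∀ x y : X, ∃ γ : Set X, IsGeodesicSeg γ x y

lemma mem_projSet_iff {A B : Set X} {p : X} :
    p ∈ projSet A B ↔ ∃ q ∈ B, p ∈ A ∧ dist q p = infDist q A := by
  simp only [projSet, proj, Set.mem_iUnion, Set.mem_setOf_eq]
  tauto

lemma seg_nonempty_bounded {f : ℝ → X} {L a b : ℝ} (hab : a ≤ b) (h0 : 0 ≤ a) (hL : b ≤ L)
    (hiso : ∀ u ∈ Icc 0 L, ∀ v ∈ Icc 0 L, dist (f u) (f v) = |u - v|) :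
    (f '' Icc a b).Nonempty ∧ Bornology.IsBounded (f '' Icc a b) := by
  refine ⟨⟨f a, ⟨a, ⟨le_refl a, hab⟩, rfl⟩⟩, ?_⟩
  rw [Metric.isBounded_iff]
  refine ⟨b - a, ?_⟩
  rintro _ ⟨u, hu, rfl⟩ _ ⟨v, hv, rfl⟩
  rw [hiso u ⟨by linarith [hu.1], by linarith [hu.2]⟩ v ⟨by linarith [hv.1], by linarith [hv.2]⟩,
    abs_sub_le_iff]
  constructor <;> linarith [hu.1, hu.2, hv.1, hv.2]

lemma geo_nonempty_bounded {γ : Set X} {a b : X} (h : IsGeodesicSeg γ a b) :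
    γ.Nonempty ∧ Bornology.IsBounded γ := by
  obtain ⟨g, M, hM, hiso, -, -, rfl⟩ := h
  exact seg_nonempty_bounded hM le_rfl le_rfl hiso

/-- Right-side projection bound. -/
lemma right_bound {f : ℝ → X} {L s t : ℝ} {κ : Set X} {D D' : ℝ}
    (hD : 0 < D) (hst : s ≤ t) (hs0 : 0 ≤ s) (htL : t ≤ L)
    (hiso : ∀ u ∈ Icc 0 L, ∀ v ∈ Icc 0 L, dist (f u) (f v) = |u - v|)
    (hκne : κ.Nonempty) (hκbd : Bornology.IsBounded κ)
    (hH : hausdorffDist (f '' Icc s t) κ < D)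
    {q : X} {w : ℝ} (hw : t ≤ w) (hwL : w ≤ L) (hq : dist q (f w) ≤ D')
    {p : X} (hp : p ∈ κ) (hproj : dist q p = infDist q κ) :
    dist p (f t) ≤ 3 * D + 2 * D' := by
  obtain ⟨hne, hbd⟩ := seg_nonempty_bounded hst hs0 htL hiso
  have hfin : EMetric.hausdorffEdist (f '' Icc s t) κ ≠ ⊤ :=
    hausdorffEdist_ne_top_of_nonempty_of_bounded hne hκne hbd hκbd
  have hft : f t ∈ f '' Icc s t := ⟨t, ⟨hst, le_refl t⟩, rfl⟩
  obtain ⟨c', hc', hcd⟩ := exists_dist_lt_of_hausdorffDist_lt hft hH hfin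
  obtain ⟨fu, hfu, hud⟩ := exists_dist_lt_of_hausdorffDist_lt' hp hH hfin
  obtain ⟨u, hu, rfl⟩ := hfu
  have huI : u ∈ Icc (0:ℝ) L := ⟨by linarith [hu.1], by linarith [hu.2]⟩
  have hwI : w ∈ Icc (0:ℝ) L := ⟨by linarith, hwL⟩
  have htI : t ∈ Icc (0:ℝ) L := ⟨by linarith, htL⟩
  have hwt : dist (f w) (f t) = w - t := by
    rw [hiso w hwI t htI, abs_of_nonneg (by linarith)]
  have hwu : dist (f w) (f u) = w - u := by
    rw [hiso w hwI u huI, abs_of_nonneg (by linarith [hu.2])]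
  have hut : dist (f u) (f t) = t - u := by
    rw [hiso u huI t htI, abs_of_nonpos (by linarith [hu.2]), neg_sub]
  have h1 : dist q p ≤ dist q c' := hproj ▸ infDist_le_dist_of_mem hc'
  have h2 : dist q c' ≤ dist q (f w) + dist (f w) (f t) + dist (f t) c' := dist_triangle4 _ _ _ _
  have h3 : dist (f w) (f u) ≤ dist (f w) q + dist q p + dist p (f u) := dist_triangle4 _ _ _ _
  have h4 : dist p (f t) ≤ dist p (f u) + dist (f u) (f t) := dist_triangle _ _ _
  rw [dist_comm (f u) p] at hud
  rw [dist_comm (f w) q] at h3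
  linarith [hwt, hwu, hut]

/-- Left-side projection bound. -/
lemma left_bound {f : ℝ → X} {L s t : ℝ} {κ : Set X} {D D' : ℝ}
    (hD : 0 < D) (hst : s ≤ t) (hs0 : 0 ≤ s) (htL : t ≤ L)
    (hiso : ∀ u ∈ Icc 0 L, ∀ v ∈ Icc 0 L, dist (f u) (f v) = |u - v|)
    (hκne : κ.Nonempty) (hκbd : Bornology.IsBounded κ)
    (hH : hausdorffDist (f '' Icc s t) κ < D)
    {q : X} {w : ℝ} (hw : w ≤ s) (hw0 : 0 ≤ w) (hq : dist q (f w) ≤ D')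
    {p : X} (hp : p ∈ κ) (hproj : dist q p = infDist q κ) :
    dist p (f s) ≤ 3 * D + 2 * D' := by
  obtain ⟨hne, hbd⟩ := seg_nonempty_bounded hst hs0 htL hiso
  have hfin : EMetric.hausdorffEdist (f '' Icc s t) κ ≠ ⊤ :=
    hausdorffEdist_ne_top_of_nonempty_of_bounded hne hκne hbd hκbd
  have hfs : f s ∈ f '' Icc s t := ⟨s, ⟨le_refl s, hst⟩, rfl⟩
  obtain ⟨c', hc', hcd⟩ := exists_dist_lt_of_hausdorffDist_lt hfs hH hfin
  obtain ⟨fu, hfu, hud⟩ := exists_dist_lt_of_hausdorffDist_lt' hp hH hfin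
  obtain ⟨u, hu, rfl⟩ := hfu
  have huI : u ∈ Icc (0:ℝ) L := ⟨by linarith [hu.1], by linarith [hu.2]⟩
  have hwI : w ∈ Icc (0:ℝ) L := ⟨hw0, by linarith⟩
  have hsI : s ∈ Icc (0:ℝ) L := ⟨hs0, by linarith⟩
  have hws : dist (f w) (f s) = s - w := by
    rw [hiso w hwI s hsI, abs_of_nonpos (by linarith), neg_sub]
  have hwu : dist (f w) (f u) = u - w := by
    rw [hiso w hwI u huI, abs_of_nonpos (by linarith [hu.1]), neg_sub]
  have hus : dist (f u) (f s) = u - s := by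
    rw [hiso u huI s hsI, abs_of_nonneg (by linarith [hu.1])]
  have h1 : dist q p ≤ dist q c' := hproj ▸ infDist_le_dist_of_mem hc'
  have h2 : dist q c' ≤ dist q (f w) + dist (f w) (f s) + dist (f s) c' := dist_triangle4 _ _ _ _
  have h3 : dist (f w) (f u) ≤ dist (f w) q + dist q p + dist p (f u) := dist_triangle4 _ _ _ _
  have h4 : dist p (f s) ≤ dist p (f u) + dist (f u) (f s) := dist_triangle _ _ _
  rw [dist_comm (f u) p] at hud
  rw [dist_comm (f w) q] at h3
  linarith [hws, hwu, hus]

lemma diam_le_two_of_dist_le {S : Set X} {z : X} {R : ℝ} (hR : 0 ≤ R)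
    (h : ∀ p ∈ S, dist p z ≤ R) : diam S ≤ 2 * R := by
  refine diam_le_of_forall_dist_le (by linarith) fun p hp q hq => ?_
  have := h p hp; have := h q hq
  have := dist_triangle p z q
  rw [dist_comm z q] at this
  linarith

/-- if a geodesic `[x,y]` contains subsegments, in order, that
`D`-fellow travel geodesics `κ₁, …, κ_N`, then `(x, κ₁, …, κ_N, y)` is
`E`-aligned, for some `E = E(D) > D`. -/
theorem stmt13 {X : Type*} [MetricSpace X] (D : ℝ) (hD : 0 < D) :
    ∃ E : ℝ, D < E ∧
      ∀ (x y : X) (f : ℝ → X) (L : ℝ) (N : ℕ)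
        (κ : Fin N → Set X) (a b : Fin N → X) (s t : Fin N → ℝ),
        0 ≤ L →
        (∀ u ∈ Icc 0 L, ∀ v ∈ Icc 0 L, dist (f u) (f v) = |u - v|) →
        f 0 = x → f L = y →
        (∀ i, IsGeodesicSeg (κ i) (a i) (b i)) →
        (∀ i, 0 ≤ s i ∧ s i ≤ t i ∧ t i ≤ L) →
        (∀ i : Fin N, ∀ hi : (i : ℕ) + 1 < N, t i ≤ s ⟨(i : ℕ) + 1, hi⟩) →
        (∀ i, dist (f (s i)) (a i) < D ∧ dist (f (t i)) (b i) < D ∧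
          hausdorffDist (f '' Icc (s i) (t i)) (κ i) < D) →
        (∀ i : Fin N, ∀ hi : (i : ℕ) + 1 < N,
          diam (projSet (κ i) {b i} ∪ projSet (κ i) (κ ⟨(i : ℕ) + 1, hi⟩)) < E ∧
          diam (projSet (κ ⟨(i : ℕ) + 1, hi⟩) {a ⟨(i : ℕ) + 1, hi⟩}
            ∪ projSet (κ ⟨(i : ℕ) + 1, hi⟩) (κ i)) < E) ∧
        (∀ hN : 0 < N,
          diam (projSet (κ ⟨0, hN⟩) {a ⟨0, hN⟩} ∪ projSet (κ ⟨0, hN⟩) {x}) < E ∧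
          diam (projSet (κ ⟨N - 1, Nat.sub_lt hN one_pos⟩)
              {b ⟨N - 1, Nat.sub_lt hN one_pos⟩}
            ∪ projSet (κ ⟨N - 1, Nat.sub_lt hN one_pos⟩) {y}) < E) := by
  refine ⟨10 * D + 1, by linarith, ?_⟩
  intro x y f L N κ a b s t hL hiso hfx hfy hκ hst hord hfell
  have hDnn : (0:ℝ) ≤ D := hD.le
  constructor
  · intro i hi
    set j : Fin N := ⟨(i:ℕ)+1, hi⟩ with hj
    obtain ⟨hκne_i, hκbd_i⟩ := geo_nonempty_bounded (hκ i)
    obtain ⟨hκne_j, hκbd_j⟩ := geo_nonempty_bounded (hκ j)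
    obtain ⟨hsa_i, htb_i, hH_i⟩ := hfell i
    obtain ⟨hsa_j, htb_j, hH_j⟩ := hfell j
    obtain ⟨hs0_i, hst_i, htL_i⟩ := hst i
    obtain ⟨hs0_j, hst_j, htL_j⟩ := hst j
    have hts : t i ≤ s j := hord i hi
    obtain ⟨hne_i, hbd_i⟩ := seg_nonempty_bounded hst_i hs0_i htL_i hiso
    obtain ⟨hne_j, hbd_j⟩ := seg_nonempty_bounded hst_j hs0_j htL_j hiso
    have hfin_i : EMetric.hausdorffEdist (f '' Icc (s i) (t i)) (κ i) ≠ ⊤ :=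
      hausdorffEdist_ne_top_of_nonempty_of_bounded hne_i hκne_i hbd_i hκbd_i
    have hfin_j : EMetric.hausdorffEdist (f '' Icc (s j) (t j)) (κ j) ≠ ⊤ :=
      hausdorffEdist_ne_top_of_nonempty_of_bounded hne_j hκne_j hbd_j hκbd_j
    constructor
    · have key : ∀ p ∈ projSet (κ i) {b i} ∪ projSet (κ i) (κ j),
          dist p (f (t i)) ≤ 5 * D := by
        rintro p (hp | hp)
        · obtain ⟨q, hq, hpA, hpd⟩ := mem_projSet_iff.mp hp
          rw [mem_singleton_iff] at hq; subst hq
          have hqd : dist (b i) (f (t i)) ≤ D := by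
            rw [dist_comm]; exact htb_i.le
          have := right_bound hD hst_i hs0_i htL_i hiso hκne_i hκbd_i hH_i
            le_rfl htL_i hqd hpA hpd
          linarith
        · obtain ⟨q, hq, hpA, hpd⟩ := mem_projSet_iff.mp hp
          obtain ⟨fv, hfv, hvd⟩ := exists_dist_lt_of_hausdorffDist_lt' hq hH_j hfin_j
          obtain ⟨v, hv, rfl⟩ := hfv
          have hqd : dist q (f v) ≤ D := by rw [dist_comm]; exact hvd.le
          have := right_bound hD hst_i hs0_i htL_i hiso hκne_i hκbd_i hH_i
            (le_trans hts hv.1) (le_trans hv.2 htL_j) hqd hpA hpd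
          linarith
      calc diam (projSet (κ i) {b i} ∪ projSet (κ i) (κ j)) ≤ 2 * (5 * D) :=
            diam_le_two_of_dist_le (by linarith) key
        _ < 10 * D + 1 := by linarith
    · have key : ∀ p ∈ projSet (κ j) {a j} ∪ projSet (κ j) (κ i),
          dist p (f (s j)) ≤ 5 * D := by
        rintro p (hp | hp)
        · obtain ⟨q, hq, hpA, hpd⟩ := mem_projSet_iff.mp hp
          rw [mem_singleton_iff] at hq; subst hq
          have hqd : dist (a j) (f (s j)) ≤ D := by
            rw [dist_comm]; exact hsa_j.le
          have := left_bound hD hst_j hs0_j htL_j hiso hκne_j hκbd_j hH_j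
            le_rfl hs0_j hqd hpA hpd
          linarith
        · obtain ⟨q, hq, hpA, hpd⟩ := mem_projSet_iff.mp hp
          obtain ⟨fv, hfv, hvd⟩ := exists_dist_lt_of_hausdorffDist_lt' hq hH_i hfin_i
          obtain ⟨v, hv, rfl⟩ := hfv
          have hqd : dist q (f v) ≤ D := by rw [dist_comm]; exact hvd.le
          have := left_bound hD hst_j hs0_j htL_j hiso hκne_j hκbd_j hH_j
            (le_trans hv.2 hts) (le_trans hs0_i hv.1) hqd hpA hpd
          linarith
      calc diam (projSet (κ j) {a j} ∪ projSet (κ j) (κ i)) ≤ 2 * (5 * D) :=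
            diam_le_two_of_dist_le (by linarith) key
        _ < 10 * D + 1 := by linarith
  · intro hN
    constructor
    · set i : Fin N := ⟨0, hN⟩ with hi
      obtain ⟨hκne_i, hκbd_i⟩ := geo_nonempty_bounded (hκ i)
      obtain ⟨hsa_i, htb_i, hH_i⟩ := hfell i
      obtain ⟨hs0_i, hst_i, htL_i⟩ := hst i
      have key : ∀ p ∈ projSet (κ i) {a i} ∪ projSet (κ i) {x},
          dist p (f (s i)) ≤ 5 * D := by
        rintro p (hp | hp)
        · obtain ⟨q, hq, hpA, hpd⟩ := mem_projSet_iff.mp hp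
          rw [mem_singleton_iff] at hq; subst hq
          have hqd : dist (a i) (f (s i)) ≤ D := by rw [dist_comm]; exact hsa_i.le
          have := left_bound hD hst_i hs0_i htL_i hiso hκne_i hκbd_i hH_i
            le_rfl hs0_i hqd hpA hpd
          linarith
        · obtain ⟨q, hq, hpA, hpd⟩ := mem_projSet_iff.mp hp
          rw [mem_singleton_iff] at hq
          have hqd : dist q (f 0) ≤ (0:ℝ) := by rw [hq, ← hfx, dist_self]
          have := left_bound hD hst_i hs0_i htL_i hiso hκne_i hκbd_i hH_i
            hs0_i le_rfl hqd hpA hpd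
          linarith
      calc diam (projSet (κ i) {a i} ∪ projSet (κ i) {x}) ≤ 2 * (5 * D) :=
            diam_le_two_of_dist_le (by linarith) key
        _ < 10 * D + 1 := by linarith
    · set i : Fin N := ⟨N - 1, Nat.sub_lt hN one_pos⟩ with hi
      obtain ⟨hκne_i, hκbd_i⟩ := geo_nonempty_bounded (hκ i)
      obtain ⟨hsa_i, htb_i, hH_i⟩ := hfell i
      obtain ⟨hs0_i, hst_i, htL_i⟩ := hst i
      have key : ∀ p ∈ projSet (κ i) {b i} ∪ projSet (κ i) {y},
          dist p (f (t i)) ≤ 5 * D := by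
        rintro p (hp | hp)
        · obtain ⟨q, hq, hpA, hpd⟩ := mem_projSet_iff.mp hp
          rw [mem_singleton_iff] at hq; subst hq
          have hqd : dist (b i) (f (t i)) ≤ D := by rw [dist_comm]; exact htb_i.le
          have := right_bound hD hst_i hs0_i htL_i hiso hκne_i hκbd_i hH_i
            le_rfl htL_i hqd hpA hpd
          linarith
        · obtain ⟨q, hq, hpA, hpd⟩ := mem_projSet_iff.mp hp
          rw [mem_singleton_iff] at hq
          have hqd : dist q (f L) ≤ (0:ℝ) := by rw [hq, ← hfy, dist_self]
          have := right_bound hD hst_i hs0_i htL_i hiso hκne_i hκbd_i hH_i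
            htL_i le_rfl hqd hpA hpd
          linarith
      calc diam (projSet (κ i) {b i} ∪ projSet (κ i) {y}) ≤ 2 * (5 * D) :=
            diam_le_two_of_dist_le (by linarith) key
        _ < 10 * D + 1 := by linarith
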